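/- (Miyasawa/Tweedie identity for the optimal MMSE denoiser.) Let μ be a probability measure on EuclideanSpace ℝ (Fin n), let σ > 0, and let φ(t) = (2πσ²)^(−n/2) · exp(−‖t‖²/(2σ²)). Define p̄(y) = ∫ φ(y − x) dμ(x) and the posterior mean R*(y) = (1/p̄(y)) • ∫ x · φ(y − x) dμ(x). Then for every y, R*(y) − y = σ² • (∇p̄(y) / p̄(y)), i.e., R*(y) = y + σ² • ∇(log ∘ p̄)(y). -/

import Mathlib

open MeasureTheory

private lemma aux_exp_bound (σ t : ℝ) (hσ : 0 < σ) (ht : 0 ≤ t) :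
    t * Real.exp (-t ^ 2 / (2 * σ ^ 2)) ≤ σ := by
  have hσ2 : (0:ℝ) < 2 * σ ^ 2 := by positivity
  have h1 : t ^ 2 / (2 * σ ^ 2) + 1 ≤ Real.exp (t ^ 2 / (2 * σ ^ 2)) :=
    Real.add_one_le_exp _
  have h2 : (0:ℝ) < t ^ 2 / (2 * σ ^ 2) + 1 := by positivity
  have h3 : Real.exp (-t ^ 2 / (2 * σ ^ 2)) ≤ (t ^ 2 / (2 * σ ^ 2) + 1)⁻¹ := by
    rw [neg_div, Real.exp_neg]
    exact inv_anti₀ h2 h1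
  have h4 : t * Real.exp (-t ^ 2 / (2 * σ ^ 2)) ≤ t * (t ^ 2 / (2 * σ ^ 2) + 1)⁻¹ :=
    mul_le_mul_of_nonneg_left h3 ht
  refine h4.trans ?_
  rw [← div_eq_mul_inv, div_le_iff₀ h2, mul_comm]
  have expand : (t ^ 2 / (2 * σ ^ 2) + 1) * σ = t ^ 2 / (2 * σ) + σ := by
    field_simp
  rw [expand, ← sub_nonneg]
  have : t ^ 2 / (2 * σ) + σ - t = ((t - σ) ^ 2 + σ ^ 2) / (2 * σ) := by
    field_simp; ring
  rw [this]
  positivity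

theorem stmt_11 (n : ℕ) (μ : Measure (EuclideanSpace ℝ (Fin n)))
    [IsProbabilityMeasure μ] (σ : ℝ) (hσ : 0 < σ)
    (φ : EuclideanSpace ℝ (Fin n) → ℝ)
    (hφ : ∀ t, φ t = (2 * Real.pi * σ ^ 2) ^ (-(n : ℝ) / 2) *
        Real.exp (-‖t‖ ^ 2 / (2 * σ ^ 2)))
    (pbar : EuclideanSpace ℝ (Fin n) → ℝ)
    (hp : ∀ y, pbar y = ∫ x, φ (y - x) ∂μ)
    (Rstar : EuclideanSpace ℝ (Fin n) → EuclideanSpace ℝ (Fin n))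
    (hR : ∀ y, Rstar y = (pbar y)⁻¹ • ∫ x, φ (y - x) • x ∂μ) :
    ∀ y, Rstar y - y = σ ^ 2 • ((pbar y)⁻¹ • gradient pbar y) ∧
      Rstar y = y + σ ^ 2 • gradient (fun w => Real.log (pbar w)) y := by
  have hσ2 : (0:ℝ) < σ ^ 2 := by positivity
  set C : ℝ := (2 * Real.pi * σ ^ 2) ^ (-(n : ℝ) / 2) with hCdef
  have hCpos : 0 < C := Real.rpow_pos_of_pos (by positivity) _
  have hφpos : ∀ t, 0 < φ t := by
    intro t; rw [hφ]; exact mul_pos hCpos (Real.exp_pos _)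
  have hφle : ∀ t, φ t ≤ C := by
    intro t; rw [hφ]
    have : Real.exp (-‖t‖ ^ 2 / (2 * σ ^ 2)) ≤ 1 := by
      apply Real.exp_le_one_iff.2
      exact div_nonpos_of_nonpos_of_nonneg (neg_nonpos.2 (by positivity)) (by positivity)
    nlinarith
  have hφmul : ∀ t : EuclideanSpace ℝ (Fin n), φ t * ‖t‖ ≤ C * σ := by
    intro t
    rw [hφ, mul_assoc, mul_comm (Real.exp _)]
    exact mul_le_mul_of_nonneg_left (aux_exp_bound σ ‖t‖ hσ (norm_nonneg t)) hCpos.le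
  have hφcont : Continuous φ := by
    have : φ = fun t => C * Real.exp (-‖t‖ ^ 2 / (2 * σ ^ 2)) := funext hφ
    rw [this]; fun_prop
  -- integrability of the kernel
  have hint1 : ∀ z : EuclideanSpace ℝ (Fin n), Integrable (fun x => φ (z - x)) μ := by
    intro z
    refine Integrable.mono' (integrable_const C)
      ((hφcont.comp (continuous_const.sub continuous_id)).aestronglyMeasurable) ?_
    filter_upwards with x
    rw [Real.norm_eq_abs, abs_of_pos (hφpos _)]
    exact hφle _
  have hint2 : ∀ z : EuclideanSpace ℝ (Fin n), Integrable (fun x => φ (z - x) • x) μ := by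
    intro z
    refine Integrable.mono' (g := fun _ => C * σ + C * ‖z‖) (integrable_const _)
      (((hφcont.comp (continuous_const.sub continuous_id)).smul continuous_id).aestronglyMeasurable) ?_
    filter_upwards with x
    rw [norm_smul, Real.norm_eq_abs, abs_of_pos (hφpos _)]
    have h1 : ‖x‖ ≤ ‖z - x‖ + ‖z‖ := by
      have := norm_sub_le (z - x) z
      simpa [sub_sub_cancel_left, norm_neg] using this
    calc φ (z - x) * ‖x‖ ≤ φ (z - x) * (‖z - x‖ + ‖z‖) :=
          mul_le_mul_of_nonneg_left h1 (hφpos _).le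
      _ = φ (z - x) * ‖z - x‖ + φ (z - x) * ‖z‖ := by ring
      _ ≤ C * σ + C * ‖z‖ :=
          add_le_add (hφmul _) (mul_le_mul_of_nonneg_right (hφle _) (norm_nonneg z))
  have hppos : ∀ z, 0 < pbar z := by
    intro z
    rw [hp]
    rw [integral_pos_iff_support_of_nonneg (fun x => (hφpos (z - x)).le) (hint1 z)]
    have : (Function.support fun x => φ (z - x)) = Set.univ := by
      ext x; simp [Function.mem_support, (hφpos (z - x)).ne']
    rw [this]
    simp
  intro y
  -- the pointwise gradient of the kernel
  set g : EuclideanSpace ℝ (Fin n) → EuclideanSpace ℝ (Fin n) → EuclideanSpace ℝ (Fin n) :=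
    fun x z => (-(σ ^ 2)⁻¹ * φ (z - x)) • (z - x) with hgdef
  have hker : ∀ (x z : EuclideanSpace ℝ (Fin n)), HasFDerivAt (fun w => φ (w - x))
      ((InnerProductSpace.toDual ℝ (EuclideanSpace ℝ (Fin n))) (g x z)) z := by
    intro x z
    have h1 : HasFDerivAt (fun w : EuclideanSpace ℝ (Fin n) => ‖w - x‖ ^ 2)
        (2 • (innerSL ℝ (z - x))) z := by
      simpa using ((hasFDerivAt_id z).sub_const x).norm_sq
    have h2 := ((h1.const_mul (-(2 * σ ^ 2)⁻¹)).exp).const_mul C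
    have hfun : (fun w => φ (w - x)) =
        fun w => C * Real.exp (-(2 * σ ^ 2)⁻¹ * ‖w - x‖ ^ 2) := by
      funext w; rw [hφ]
      congr 1
      ring
    rw [hfun]
    refine h2.congr_fderiv ?_
    symm
    ext w
    simp only [InnerProductSpace.toDual_apply_apply, ContinuousLinearMap.smul_apply,
      ContinuousLinearMap.coe_smul', Pi.smul_apply, innerSL_apply_apply, smul_eq_mul]
    rw [hgdef]
    simp only [real_inner_smul_left]
    rw [hφ]
    have h2σ : (2 * σ ^ 2) ≠ 0 := by positivity
    have harg : -‖z - x‖ ^ 2 / (2 * σ ^ 2) = -(2 * σ ^ 2)⁻¹ * ‖z - x‖ ^ 2 := by ring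
    rw [harg]
    field_simp
    ring
  -- integrability of the gradient family
  have hgcont : Continuous (fun x => g x y) := by
    rw [hgdef]
    exact ((continuous_const.mul (hφcont.comp (continuous_const.sub continuous_id))).smul
      (continuous_const.sub continuous_id))
  have hgbound : ∀ (x z : EuclideanSpace ℝ (Fin n)), ‖g x z‖ ≤ C / σ := by
    intro x z
    rw [hgdef]
    simp only [norm_smul, Real.norm_eq_abs]
    rw [abs_mul, abs_neg, abs_of_pos (hφpos _), abs_of_pos (inv_pos.2 hσ2)]
    rw [mul_assoc]
    calc (σ ^ 2)⁻¹ * (φ (z - x) * ‖z - x‖) ≤ (σ ^ 2)⁻¹ * (C * σ) :=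
          mul_le_mul_of_nonneg_left (hφmul _) (inv_pos.2 hσ2).le
      _ = C / σ := by field_simp
  have hGint : Integrable (fun x => g x y) μ := by
    refine Integrable.mono' (integrable_const (C / σ)) hgcont.aestronglyMeasurable ?_
    filter_upwards with x using hgbound x y
  have hF'int : Integrable
      (fun x => (InnerProductSpace.toDual ℝ (EuclideanSpace ℝ (Fin n))) (g x y)) μ := by
    refine Integrable.mono' hGint.norm
      (((InnerProductSpace.toDual ℝ _).continuous.comp hgcont).aestronglyMeasurable) ?_
    filter_upwards with x
    rw [LinearIsometryEquiv.norm_map]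
  -- differentiate under the integral sign
  have hderiv : HasFDerivAt (fun z => ∫ x, φ (z - x) ∂μ)
      (∫ x, (InnerProductSpace.toDual ℝ (EuclideanSpace ℝ (Fin n))) (g x y) ∂μ) y := by
    apply hasFDerivAt_integral_of_dominated_of_fderiv_le
      (F' := fun z x => (InnerProductSpace.toDual ℝ (EuclideanSpace ℝ (Fin n))) (g x z))
      (bound := fun _ => C / σ) (s := Set.univ) Filter.univ_mem
    · filter_upwards with z
      exact (hφcont.comp (continuous_const.sub continuous_id)).aestronglyMeasurable
    · exact hint1 y
    · exact ((InnerProductSpace.toDual ℝ _).continuous.comp hgcont).aestronglyMeasurable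
    · filter_upwards with x z _
      rw [LinearIsometryEquiv.norm_map]
      exact hgbound x z
    · exact integrable_const _
    · filter_upwards with x z _
      exact hker x z
  -- swap integral and toDual
  have hswap : (∫ x, (InnerProductSpace.toDual ℝ (EuclideanSpace ℝ (Fin n))) (g x y) ∂μ) =
      (InnerProductSpace.toDual ℝ (EuclideanSpace ℝ (Fin n))) (∫ x, g x y ∂μ) := by
    apply ContinuousLinearMap.ext
    intro w
    rw [ContinuousLinearMap.integral_apply hF'int]
    simp only [InnerProductSpace.toDual_apply_apply]
    calc (∫ x, (inner ℝ (g x y) w : ℝ) ∂μ)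
        = ∫ x, (inner ℝ w (g x y) : ℝ) ∂μ := by
          refine integral_congr_ae (Filter.Eventually.of_forall fun x => ?_)
          exact real_inner_comm _ _
      _ = inner ℝ w (∫ x, g x y ∂μ) := integral_inner hGint w
      _ = inner ℝ (∫ x, g x y ∂μ) w := real_inner_comm _ _
  have hgradp : HasGradientAt pbar (∫ x, g x y ∂μ) y := by
    rw [hasGradientAt_iff_hasFDerivAt]
    have hpf : pbar = fun z => ∫ x, φ (z - x) ∂μ := funext hp
    rw [hpf, ← hswap]
    exact hderiv
  set G : EuclideanSpace ℝ (Fin n) := ∫ x, g x y ∂μ with hGdef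
  have hgrad_eq : gradient pbar y = G := hgradp.gradient
  -- compute G
  have hGeq : G = (σ ^ 2)⁻¹ • ((∫ x, φ (y - x) • x ∂μ) - pbar y • y) := by
    rw [hGdef]
    have h1 : (fun x => g x y) =
        fun x => (σ ^ 2)⁻¹ • (φ (y - x) • x - φ (y - x) • y) := by
      funext x
      rw [hgdef]
      module
    rw [h1, integral_smul]
    congr 1
    rw [integral_sub (hint2 y) ((hint1 y).smul_const y)]
    congr 1
    rw [integral_smul_const, hp]
  have hpne : pbar y ≠ 0 := (hppos y).ne'
  have key : Rstar y - y = σ ^ 2 • ((pbar y)⁻¹ • G) := by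
    rw [hR, hGeq]
    match_scalars <;> field_simp
  refine ⟨by rw [hgrad_eq]; exact key, ?_⟩
  -- gradient of log pbar
  have hlog : HasGradientAt (fun w => Real.log (pbar w)) ((pbar y)⁻¹ • G) y := by
    rw [hasGradientAt_iff_hasFDerivAt]
    have hd : HasDerivAt Real.log (pbar y)⁻¹ (pbar y) := Real.hasDerivAt_log hpne
    have hcomp := hd.comp_hasFDerivAt y hgradp.hasFDerivAt
    refine hcomp.congr_fderiv ?_
    symm
    ext w
    simp [InnerProductSpace.toDual_apply_apply, real_inner_smul_left]
  rw [hlog.gradient, ← key]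
  abel
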